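/- There is no choice of quaternions c₀, c₁, c₂ and non-real quaternion p such that q² = (q-p)² c₂ + (q-p) c₁ + c₀ holds for all quaternions q. -/

import Mathlib

local notation "ℍ" => Quaternion ℝ

theorem no_ordinary_expansion :
    ¬ ∃ (p c₀ c₁ c₂ : ℍ), p.im ≠ 0 ∧
      ∀ q : ℍ, q^2 = (q - p)^2 * c₂ + (q - p) * c₁ + c₀ := by
  rintro ⟨p, c₀, c₁, c₂, hp, h⟩
  have key : ∀ x : ℍ, (2:ℍ) * (p * x + x * p) = 2 * (x * c₁) := by
    intro x
    have h1 := h (p + x)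
    have h2 := h (p - x)
    have e1 : (p + x) - p = x := by abel
    have e2 : (p - x) - p = -x := by abel
    rw [e1] at h1
    rw [e2] at h2
    calc (2:ℍ) * (p * x + x * p)
        = (p + x)^2 - (p - x)^2 := by noncomm_ring
      _ = (x^2 * c₂ + x * c₁ + c₀) - ((-x)^2 * c₂ + (-x) * c₁ + c₀) := by rw [← h1, ← h2]
      _ = 2 * (x * c₁) := by noncomm_ring
  have key' : ∀ x : ℍ, p * x + x * p = x * c₁ :=
    fun x => mul_left_cancel₀ (by
      have h2 : ((2:ℝ):ℍ) = (2:ℍ) := by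
        rw [show (2:ℝ) = 1 + 1 by norm_num, Quaternion.coe_add, Quaternion.coe_one,
          one_add_one_eq_two]
      rw [← h2]
      intro hz
      rw [show (0:ℍ) = ((0:ℝ):ℍ) from (Quaternion.coe_zero).symm, Quaternion.coe_inj] at hz
      norm_num at hz : (2:ℍ) ≠ 0) (key x)
  have hc₁ : c₁ = p + p := by
    have := key' 1
    simpa using this.symm
  have comm : ∀ x : ℍ, p * x = x * p := by
    intro x
    have := key' x
    rw [hc₁, mul_add] at this
    linear_combination (norm := noncomm_ring) this
  have hi := comm ⟨0,1,0,0⟩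
  have hj := comm ⟨0,0,1,0⟩
  rw [Quaternion.ext_iff] at hi hj
  erw [Quaternion.re_mul, Quaternion.re_mul, Quaternion.imI_mul, Quaternion.imI_mul, Quaternion.imJ_mul,
    Quaternion.imJ_mul, Quaternion.imK_mul, Quaternion.imK_mul] at hi hj
  simp at hi hj
  apply hp
  rw [Quaternion.ext_iff]
  simp [Quaternion.im, QuaternionAlgebra.im]
  simp only [show (0:ℍ) = ⟨0,0,0,0⟩ from rfl, true_and]
  obtain ⟨hi1, hi2⟩ := hi
  obtain ⟨hj1, hj2⟩ := hj
  refine ⟨?_, ?_, ?_⟩ <;> linarith
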